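/- Let A be a positive definite n×n matrix. Then for every n×n complex matrix Y, Re(Y A⁻¹ Y) ≤ (Re Y) A⁻¹ (Re Y) in the Loewner order. -/
import Mathlib

open Matrix
open scoped ComplexOrder

/-- The real part `Re X = (X + X*) / 2` of a matrix. -/
noncomputable def reM {n : ℕ} (X : Matrix (Fin n) (Fin n) ℂ) : Matrix (Fin n) (Fin n) ℂ :=
  (1 / 2 : ℂ) • (X + Xᴴ)

theorem re_YAinvY_le {n : ℕ} (A : Matrix (Fin n) (Fin n) ℂ) (hA : A.PosDef)
    (Y : Matrix (Fin n) (Fin n) ℂ) :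
    (reM Y * A⁻¹ * reM Y - reM (Y * A⁻¹ * Y)).PosSemidef := by
  have hB : A⁻¹ᴴ = A⁻¹ := hA.inv.isHermitian
  have key : reM Y * A⁻¹ * reM Y - reM (Y * A⁻¹ * Y) =
      ((1/2 : ℂ) • (Y - Yᴴ))ᴴ * A⁻¹ * ((1/2 : ℂ) • (Y - Yᴴ)) := by
    simp only [reM, conjTranspose_smul, conjTranspose_sub, conjTranspose_add,
      conjTranspose_mul, conjTranspose_conjTranspose, hB]
    simp only [Matrix.smul_mul, Matrix.mul_smul, smul_smul, Matrix.mul_add, Matrix.add_mul,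
      Matrix.mul_sub, Matrix.sub_mul, smul_add, smul_sub]
    have h2 : star (1/2 : ℂ) = 1/2 := by
      rw [star_div₀, star_one]; norm_num
    simp only [h2, ← mul_assoc]
    module
  rw [key]
  exact hA.inv.posSemidef.conjTranspose_mul_mul_same _
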